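/- arXiv:2412.00590 — 2 statements merged into one kernel-verified Lean document; each statement's English description precedes it below -/
import Mathlib

section
/- Let S be an additively reduced semidomain and G a linearly ordered torsion-free abelian group. If f = ∑_{i=0}^n s_i x^{g_i} ∈ S[G] with g_0 > ⋯ > g_n, all s_i nonzero, n ≥ 1, and 2g_{n-1} > g_0 + g_n, then f is monolithic; moreover if f has more than three terms and 2g_{n-1} ≥ g_0 + g_n, then f is monolithic. -/
lemma addReduced_sum_eq_zero {S : Type*} [AddCommMonoid S]
    (hred : ∀ a b : S, a + b = 0 → a = 0)
    {ι : Type*} (t : Finset ι) (h : ι → S) :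
    ∑ i ∈ t, h i = 0 → ∀ i ∈ t, h i = 0 := by
  classical
  induction t using Finset.induction_on with
  | empty => intro _ i hi; simp at hi
  | @insert x t' hx ih =>
      intro ht i hi
      rw [Finset.sum_insert hx] at ht
      have h1 : h x = 0 := hred _ _ ht
      have h2 : ∑ i ∈ t', h i = 0 := by rwa [h1, zero_add] at ht
      rcases Finset.mem_insert.mp hi with rfl | hi
      · exact h1
      · exact ih h2 i hi

lemma addReduced_mem_support_mul {S : Type*} [CommSemiring S] [NoZeroDivisors S]
    {G : Type*} [AddCommGroup G] (hred : ∀ a b : S, a + b = 0 → a = 0)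
    {p q : AddMonoidAlgebra S G} {c e : G}
    (hc : c ∈ p.coeff.support) (he : e ∈ q.coeff.support) : c + e ∈ (p * q).coeff.support := by
  classical
  rw [Finsupp.mem_support_iff] at hc he ⊢
  intro h
  rw [AddMonoidAlgebra.mul_apply] at h
  simp only [Finsupp.sum] at h
  have h1 := addReduced_sum_eq_zero hred _ _ h c (Finsupp.mem_support_iff.mpr hc)
  have h2 := addReduced_sum_eq_zero hred _ _ h1 e (Finsupp.mem_support_iff.mpr he)
  rw [if_pos rfl] at h2
  rcases mul_eq_zero.mp h2 with h3 | h3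
  · exact hc h3
  · exact he h3



/-- Witness that `S` is a semidomain: an injective semiring hom into an integral domain. -/
structure SemidomainWitness (S : Type*) [CommSemiring S] where
  D : Type
  [commRing : CommRing D]
  [isDomain : IsDomain D]
  emb : S →+* D
  inj : Function.Injective emb

/-- `S` is a semidomain, i.e. (isomorphic to) a subsemiring of an integral domain. -/
def IsSemidomain (S : Type*) [CommSemiring S] : Prop := Nonempty (SemidomainWitness S)

/-- `S` is additively reduced: `0` is the only additively invertible element. -/
def AddReduced (S : Type*) [AddZeroClass S] : Prop := ∀ a b : S, a + b = 0 → a = 0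

/-- `s` is an atom of the additive monoid `(S, +)` (for `S` additively reduced):
it is nonzero and cannot be written as a sum of two nonzero elements. -/
def IsAddAtom {S : Type*} [AddZeroClass S] (s : S) : Prop :=
  s ≠ 0 ∧ ∀ a b : S, s = a + b → a = 0 ∨ b = 0

/-- `S` is additively Furstenberg: every nonzero element is divisible in `(S, +)`
by an additive atom. -/
def AddFurstenberg (S : Type*) [AddZeroClass S] : Prop :=
  ∀ s : S, s ≠ 0 → ∃ a t : S, IsAddAtom a ∧ s = a + t


section GroupAlg
variable {S : Type*} [CommSemiring S] {G : Type*} [AddCommGroup G]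

/-- A monomial `s·x^g` in the group semidomain `S[G]`. -/
def IsMonomial (f : AddMonoidAlgebra S G) : Prop :=
  ∃ (g : G) (s : S), f = AddMonoidAlgebra.single g s

/-- `f` is monolithic: every factorization of `f` in `S[G]` has a monomial factor. -/
def Monolithic (f : AddMonoidAlgebra S G) : Prop :=
  f ≠ 0 ∧ ∀ p q : AddMonoidAlgebra S G, f = p * q → IsMonomial p ∨ IsMonomial q

end GroupAlg

/-- If `f = ∑_{i=0}^n s_i x^{g_i}` with `g_0 > ⋯ > g_n` and all `s_i ≠ 0`, then:
(1) if `n ≥ 1` and `2g_{n-1} > g_0 + g_n` then `f` is monolithic; and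
(2) if `f` has more than three terms and `2g_{n-1} ≥ g_0 + g_n` then `f` is monolithic. -/
theorem monolithic_of_two_smul_penultimate
    {S : Type*} [CommSemiring S] {G : Type*} [AddCommGroup G] [LinearOrder G] [IsOrderedAddMonoid G]
    (hS : IsSemidomain S) (hred : AddReduced S)
    (n : ℕ) (hn : 1 ≤ n) (s : Fin (n + 1) → S) (g : Fin (n + 1) → G)
    (hs : ∀ i, s i ≠ 0) (hg : StrictAnti g)
    (f : AddMonoidAlgebra S G)
    (hf : f = ∑ i, AddMonoidAlgebra.single (g i) (s i)) :
    (g ⟨0, by omega⟩ + g ⟨n, by omega⟩ < 2 • g ⟨n - 1, by omega⟩ → Monolithic f) ∧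
    (3 ≤ n → g ⟨0, by omega⟩ + g ⟨n, by omega⟩ ≤ 2 • g ⟨n - 1, by omega⟩ → Monolithic f) := by
  classical
  obtain ⟨w⟩ := hS
  letI := w.commRing
  letI := w.isDomain
  set emb := w.emb with hemb
  have hinj := w.inj
  haveI : NoZeroDivisors S := by
    constructor
    intro a b hab
    have : emb a * emb b = 0 := by rw [← map_mul, hab, map_zero]
    rcases mul_eq_zero.mp this with h | h
    · exact Or.inl (hinj (by rw [h, map_zero]))
    · exact Or.inr (hinj (by rw [h, map_zero]))
  have hred' : ∀ a b : S, a + b = 0 → a = 0 := hred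
  have hginj : Function.Injective g := hg.injective
  set i0 : Fin (n + 1) := ⟨0, by omega⟩ with hi0
  set iN : Fin (n + 1) := ⟨n, by omega⟩ with hiN
  set iM : Fin (n + 1) := ⟨n - 1, by omega⟩ with hiM
  have hcoeff : ∀ i, f.coeff (g i) = s i := by
    intro i
    rw [hf, AddMonoidAlgebra.coeff_sum, Finset.sum_apply']
    rw [Finset.sum_eq_single i (fun j _ hj => by
        rw [AddMonoidAlgebra.coeff_single, Finsupp.single_apply, if_neg (fun h => hj (hginj h))])
      (fun h => absurd (Finset.mem_univ i) h)]
    rw [AddMonoidAlgebra.coeff_single, Finsupp.single_apply, if_pos rfl]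
  have hsupp : ∀ x : G, x ∈ f.coeff.support ↔ ∃ i, g i = x := by
    intro x
    constructor
    · intro hx
      by_contra hno
      push_neg at hno
      rw [Finsupp.mem_support_iff] at hx
      apply hx
      rw [hf, AddMonoidAlgebra.coeff_sum, Finset.sum_apply']
      exact Finset.sum_eq_zero fun i _ => by
        rw [AddMonoidAlgebra.coeff_single, Finsupp.single_apply, if_neg (hno i)]
    · rintro ⟨i, rfl⟩
      rw [Finsupp.mem_support_iff, hcoeff]
      exact hs i
  have hfne : f ≠ 0 := by
    intro h
    exact hs i0 (by rw [← hcoeff i0, h]; rfl)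
  -- max / min / penultimate facts about supp f
  have hmax : ∀ x ∈ f.coeff.support, x ≤ g i0 := by
    intro x hx
    obtain ⟨i, rfl⟩ := (hsupp x).mp hx
    exact hg.antitone (by simp only [Fin.le_def, hi0, hiN, hiM]; omega)
  have hmin : ∀ x ∈ f.coeff.support, g iN ≤ x := by
    intro x hx
    obtain ⟨i, rfl⟩ := (hsupp x).mp hx
    exact hg.antitone (by simp only [Fin.le_def, hi0, hiN, hiM]; omega)
  have hpen : ∀ x ∈ f.coeff.support, x ≠ g iN → g iM ≤ x := by
    intro x hx hxn
    obtain ⟨i, rfl⟩ := (hsupp x).mp hx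
    have : i ≠ iN := fun h => hxn (by rw [h])
    have hi : i.1 ≠ n := fun h => this (Fin.ext h)
    exact hg.antitone (by simp only [Fin.le_def, hi0, hiN, hiM]; omega)
  -- the core contradiction machine
  have core : ∀ p q : AddMonoidAlgebra S G, f = p * q →
      ¬ IsMonomial p → ¬ IsMonomial q →
      2 • g iM ≤ g i0 + g iN ∧ (3 ≤ n → g i0 + g iN = 2 • g iM → False) := by
    intro p q hpq hmp hmq
    have hp0 : p ≠ 0 := by rintro rfl; rw [zero_mul] at hpq; exact hfne hpq
    have hq0 : q ≠ 0 := by rintro rfl; rw [mul_zero] at hpq; exact hfne hpq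
    have hpne : p.coeff.support.Nonempty := Finsupp.support_nonempty_iff.mpr (AddMonoidAlgebra.coeff_eq_zero.not.mpr hp0)
    have hqne : q.coeff.support.Nonempty := Finsupp.support_nonempty_iff.mpr (AddMonoidAlgebra.coeff_eq_zero.not.mpr hq0)
    set a : G := p.coeff.support.max' hpne with ha
    set a' : G := p.coeff.support.min' hpne with ha'
    set b : G := q.coeff.support.max' hqne with hb
    set b' : G := q.coeff.support.min' hqne with hb'
    have hamem : a ∈ p.coeff.support := p.coeff.support.max'_mem hpne
    have ha'mem : a' ∈ p.coeff.support := p.coeff.support.min'_mem hpne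
    have hbmem : b ∈ q.coeff.support := q.coeff.support.max'_mem hqne
    have hb'mem : b' ∈ q.coeff.support := q.coeff.support.min'_mem hqne
    have hple : ∀ c ∈ p.coeff.support, a' ≤ c ∧ c ≤ a :=
      fun c hc => ⟨p.coeff.support.min'_le c hc, p.coeff.support.le_max' c hc⟩
    have hqle : ∀ e ∈ q.coeff.support, b' ≤ e ∧ e ≤ b :=
      fun e he => ⟨q.coeff.support.min'_le e he, q.coeff.support.le_max' e he⟩
    have haa : a' < a := by
      rcases lt_or_eq_of_le (p.coeff.support.min'_le a hamem) with h | h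
      · exact h
      · exfalso
        apply hmp
        refine ⟨a, p.coeff a, AddMonoidAlgebra.coeff_injective (Finsupp.support_subset_singleton.mp ?_)⟩
        intro c hc
        rw [Finset.mem_singleton]
        exact le_antisymm ((hple c hc).2) (h ▸ (hple c hc).1)
    have hbb : b' < b := by
      rcases lt_or_eq_of_le (q.coeff.support.min'_le b hbmem) with h | h
      · exact h
      · exfalso
        apply hmq
        refine ⟨b, q.coeff b, AddMonoidAlgebra.coeff_injective (Finsupp.support_subset_singleton.mp ?_)⟩
        intro e he
        rw [Finset.mem_singleton]
        exact le_antisymm ((hqle e he).2) (h ▸ (hqle e he).1)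
    -- sums in the support of f
    have hmemf : ∀ c ∈ p.coeff.support, ∀ e ∈ q.coeff.support, c + e ∈ f.coeff.support := by
      intro c hc e he
      rw [hpq]
      exact addReduced_mem_support_mul hred' hc he
    -- g i0 = a + b
    have hg0 : g i0 = a + b := by
      refine le_antisymm ?_ (hmax _ (hmemf a hamem b hbmem))
      have h0 : g i0 ∈ f.coeff.support := (hsupp _).mpr ⟨i0, rfl⟩
      rw [hpq] at h0
      obtain ⟨c, hc, e, he, hce⟩ := Finset.mem_add.mp (AddMonoidAlgebra.support_coeff_mul_subset p q h0)
      rw [← hce]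
      exact add_le_add (hple c hc).2 (hqle e he).2
    have hgN : g iN = a' + b' := by
      refine le_antisymm (hmin _ (hmemf a' ha'mem b' hb'mem)) ?_
      have h0 : g iN ∈ f.coeff.support := (hsupp _).mpr ⟨iN, rfl⟩
      rw [hpq] at h0
      obtain ⟨c, hc, e, he, hce⟩ := Finset.mem_add.mp (AddMonoidAlgebra.support_coeff_mul_subset p q h0)
      rw [← hce]
      exact add_le_add (hple c hc).1 (hqle e he).1
    have h1 : g iM ≤ a' + b := by
      refine hpen _ (hmemf a' ha'mem b hbmem) ?_
      rw [hgN]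
      exact ne_of_gt (add_lt_add_right hbb a')
    have h2 : g iM ≤ a + b' := by
      refine hpen _ (hmemf a hamem b' hb'mem) ?_
      rw [hgN]
      exact ne_of_gt (add_lt_add_left haa b')
    have hbig : g iM + g iM ≤ g i0 + g iN := by
      rw [hg0, hgN]
      calc g iM + g iM ≤ (a' + b) + (a + b') := add_le_add h1 h2
        _ = (a + b) + (a' + b') := by abel
    constructor
    · rw [two_nsmul]; exact hbig
    · intro h3 heq
      rw [two_nsmul] at heq
      -- equality forces a' + b = g iM and a + b' = g iM
      have e1 : a' + b = g iM := by
        by_contra hne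
        have : g iM < a' + b := lt_of_le_of_ne h1 (Ne.symm hne)
        have : g iM + g iM < g i0 + g iN := by
          rw [hg0, hgN]
          calc g iM + g iM < (a' + b) + (a + b') := add_lt_add_of_lt_of_le this h2
            _ = (a + b) + (a' + b') := by abel
        exact absurd heq (ne_of_gt this)
      have e2 : a + b' = g iM := by
        have := heq
        rw [hg0, hgN] at this
        have h4 : (a' + b) + (a + b') = g iM + g iM := by
          rw [← this]; abel
        rw [e1] at h4
        exact add_left_cancel h4
      -- pick g 1 in supp f
      set i1 : Fin (n + 1) := ⟨1, by omega⟩ with hi1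
      have hg1mem : g i1 ∈ f.coeff.support := (hsupp _).mpr ⟨i1, rfl⟩
      rw [hpq] at hg1mem
      obtain ⟨c, hc, e, he, hce⟩ := Finset.mem_add.mp (AddMonoidAlgebra.support_coeff_mul_subset p q hg1mem)
      have hlt1 : g iM < g i1 := hg (by simp only [Fin.lt_def, hi1, hiM]; omega)
      have hlt2 : g i1 < g i0 := hg (by simp only [Fin.lt_def, hi1, hi0]; omega)
      have hsum : c + e = g i1 := hce
      have hcase : c < a ∨ e < b := by
        by_contra hcon
        push_neg at hcon
        have : a + b ≤ c + e := add_le_add hcon.1 hcon.2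
        rw [hsum, ← hg0] at this
        exact absurd hlt2 (not_lt.mpr this)
      have hbetween : ∀ x ∈ f.coeff.support, g iN < x → g iM ≤ x := by
        intro x hx hxgt
        exact hpen x hx (ne_of_gt hxgt)
      rcases hcase with hca | heb
      · -- c < a; show a' < c, then c + b' is strictly between g iN and g iM
        have hac : a' < c := by
          have : a' + e < c + e := by
            calc a' + e ≤ a' + b := add_le_add_right (hqle e he).2 a'
              _ = g iM := e1
              _ < g i1 := hlt1
              _ = c + e := hsum.symm
          exact lt_of_add_lt_add_right this
        have hmem : c + b' ∈ f.coeff.support := hmemf c hc b' hb'mem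
        have hgt : g iN < c + b' := by
          rw [hgN]; exact add_lt_add_left hac b'
        have hlt : c + b' < g iM := by
          rw [← e2]; exact add_lt_add_left hca b'
        exact absurd (hbetween _ hmem hgt) (not_le.mpr hlt)
      · -- e < b; show b' < e, then a' + e is strictly between g iN and g iM
        have hbe : b' < e := by
          have : c + b' < c + e := by
            calc c + b' ≤ a + b' := add_le_add_left (hple c hc).2 b'
              _ = g iM := e2
              _ < g i1 := hlt1
              _ = c + e := hsum.symm
          exact lt_of_add_lt_add_left this
        have hmem : a' + e ∈ f.coeff.support := hmemf a' ha'mem e he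
        have hgt : g iN < a' + e := by
          rw [hgN]; exact add_lt_add_right hbe a'
        have hlt : a' + e < g iM := by
          rw [← e1]; exact add_lt_add_right heb a'
        exact absurd (hbetween _ hmem hgt) (not_le.mpr hlt)
  constructor
  · intro hlt
    refine ⟨hfne, fun p q hpq => ?_⟩
    by_contra hcon
    push_neg at hcon
    have := (core p q hpq hcon.1 hcon.2).1
    exact absurd hlt (not_lt.mpr this)
  · intro h3 hle
    refine ⟨hfne, fun p q hpq => ?_⟩
    by_contra hcon
    push_neg at hcon
    obtain ⟨hbig, hcontra⟩ := core p q hpq hcon.1 hcon.2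
    exact hcontra h3 (le_antisymm hle hbig)
end

section
/- Let S be an additively reduced semidomain and G a linearly ordered torsion-free abelian group. If f = ∑_{i=0}^∞ s_i x^{g_i} ∈ S⟦G⟧ with all s_i nonzero and there exists N such that the sequence of gaps (g_{N+i+1} − g_{N+i})_{i≥0} is strictly increasing and unbounded above in G, then f is monolithic. -/
section Series
variable {S : Type*} [CommSemiring S] {G : Type*} [AddCommGroup G] [LinearOrder G] [IsOrderedAddMonoid G]

/-- `f` belongs to the group series semidomain `S⟦G⟧`: its support is contained in the range
of a strictly increasing sequence of exponents, so `f` is a formal sum `∑_{i=0}^∞ s_i x^{g_i}`. -/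
def InSeries (f : HahnSeries G S) : Prop :=
  ∃ g : ℕ → G, StrictMono g ∧ f.support ⊆ Set.range g

/-- A monomial `s·x^g` in `S⟦G⟧`. -/
def IsMonomialSeries (f : HahnSeries G S) : Prop :=
  ∃ (g : G) (s : S), f = HahnSeries.single g s

/-- `f` is monolithic in `S⟦G⟧`: every factorization of `f` within `S⟦G⟧` has a
monomial factor. -/
def MonolithicSeries (f : HahnSeries G S) : Prop :=
  f ≠ 0 ∧ ∀ p q : HahnSeries G S, InSeries p → InSeries q → f = p * q →
    IsMonomialSeries p ∨ IsMonomialSeries q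

/-- `f` is a unit of the semidomain `S⟦G⟧`. -/
def IsUnitSeries (f : HahnSeries G S) : Prop :=
  InSeries f ∧ ∃ h : HahnSeries G S, InSeries h ∧ f * h = 1

/-- `f` is irreducible in the multiplicative monoid of nonzero elements of `S⟦G⟧`. -/
def IrreducibleSeries (f : HahnSeries G S) : Prop :=
  InSeries f ∧ f ≠ 0 ∧ ¬ IsUnitSeries f ∧
    ∀ p q : HahnSeries G S, InSeries p → InSeries q → f = p * q →
      IsUnitSeries p ∨ IsUnitSeries q

end Series

lemma addReduced_sum {S : Type*} [AddCommMonoid S] (hred : AddReduced S)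
    {ι : Type*} (t : Finset ι) (F : ι → S) (h : ∑ i ∈ t, F i = 0) :
    ∀ i ∈ t, F i = 0 := by
  induction t using Finset.cons_induction with
  | empty => simp
  | cons a t ha ih =>
    rw [Finset.sum_cons] at h
    have h1 : F a = 0 := hred _ _ h
    have h2 : ∑ i ∈ t, F i = 0 := hred _ _ (by rw [add_comm] at h; exact h)
    intro i hi
    rcases Finset.mem_cons.1 hi with rfl | hi
    · exact h1
    · exact ih h2 i hi

lemma key {G : Type*} [AddCommGroup G] [LinearOrder G] [IsOrderedAddMonoid G] (g : ℕ → G) (hg : StrictMono g)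
    (N : ℕ)
    (hmono : StrictMono (fun i : ℕ => g (N + i + 1) - g (N + i)))
    (hunb : ∀ b : G, ∃ i : ℕ, b < g (N + i + 1) - g (N + i))
    (A : Set G) (hA : A.Infinite) (b0 b1 : G) (hb : b0 < b1)
    (hAB : ∀ a ∈ A, a + b0 ∈ Set.range g ∧ a + b1 ∈ Set.range g) : False := by
  obtain ⟨i0, hi0⟩ := hunb (b1 - b0)
  have himg : ((· + b0) '' A).Infinite :=
    hA.image (fun x _ y _ h => by simpa using h)
  have hnot : ¬ ((· + b0) '' A ⊆ g '' (Set.Iio (N + i0))) := by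
    intro h
    exact himg (((Set.finite_Iio _).image g).subset h)
  obtain ⟨x, hx, hx2⟩ := Set.not_subset.1 hnot
  obtain ⟨a, haA, rfl⟩ := hx
  obtain ⟨hr0, hr1⟩ := hAB a haA
  obtain ⟨m, hm⟩ := hr0
  obtain ⟨m', hm'⟩ := hr1
  have hmge : N + i0 ≤ m := by
    by_contra hlt
    exact hx2 ⟨m, Set.mem_Iio.2 (by omega), hm⟩
  have hmm' : m < m' := by
    rw [← hg.lt_iff_lt, hm, hm']
    exact add_lt_add_right hb a
  -- gap at m exceeds b1 - b0
  set i := m - N with hi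
  have hmi : m = N + i := by omega
  have hgap : b1 - b0 < g (m + 1) - g m := by
    rw [hmi]
    calc b1 - b0 < g (N + i0 + 1) - g (N + i0) := hi0
    _ ≤ g (N + i + 1) - g (N + i) := hmono.monotone (by omega)
  have hle : g (m + 1) ≤ g m' := hg.monotone (by omega)
  have hfin : g (m + 1) - g m ≤ b1 - b0 := by
    have h1 : g (m + 1) - g m ≤ g m' - g m := sub_le_sub_right hle _
    have h2 : g m' - g m = b1 - b0 := by rw [hm, hm']; abel
    rw [h2] at h1; exact h1
  exact absurd (lt_of_lt_of_le hgap hfin) (lt_irrefl _)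


lemma mul_mem_support {S : Type*} [CommSemiring S] {G : Type*} [AddCommGroup G] [LinearOrder G] [IsOrderedAddMonoid G]
    (hS : IsSemidomain S) (hred : AddReduced S) {p q : HahnSeries G S} {a b : G}
    (ha : a ∈ p.support) (hb : b ∈ q.support) : a + b ∈ (p * q).support := by
  obtain ⟨W⟩ := hS
  letI := W.commRing
  letI := W.isDomain
  intro h0
  rw [HahnSeries.coeff_mul] at h0
  have hmem : ((a, b) : G × G) ∈
      Finset.addAntidiagonal p.isPWO_support q.isPWO_support (a + b) :=
    Finset.mem_addAntidiagonal.2 ⟨ha, hb, rfl⟩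
  have := addReduced_sum hred _ _ h0 (a, b) hmem
  have hz : W.emb (p.coeff a * q.coeff b) = 0 := by rw [this]; exact map_zero _
  rw [map_mul] at hz
  rcases mul_eq_zero.1 hz with h | h
  · exact ha (W.inj (by rw [h, map_zero]))
  · exact hb (W.inj (by rw [h, map_zero]))

lemma two_of_not_monomial {S : Type*} [CommSemiring S] {G : Type*} [AddCommGroup G] [LinearOrder G] [IsOrderedAddMonoid G]
    {p : HahnSeries G S} (h : ¬ IsMonomialSeries p) :
    ∃ a b : G, a ∈ p.support ∧ b ∈ p.support ∧ a < b := by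
  by_contra hc
  push_neg at hc
  apply h
  rcases Set.eq_empty_or_nonempty p.support with he | ⟨a, ha⟩
  · refine ⟨0, 0, ?_⟩
    rw [HahnSeries.single_eq_zero]
    exact HahnSeries.support_eq_empty_iff.1 he
  · refine ⟨a, p.coeff a, ?_⟩
    ext c
    rcases eq_or_ne c a with rfl | hne
    · simp
    · rw [HahnSeries.coeff_single_of_ne hne]
      by_contra hcc
      have hcs : c ∈ p.support := hcc
      rcases lt_trichotomy a c with hlt | rfl | hlt
      · exact absurd (hc a c ha hcs) (not_le.2 hlt)
      · exact hne rfl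
      · exact absurd (hc c a hcs ha) (not_le.2 hlt)


open Pointwise in
/-- If the gaps of the exponent sequence of `f ∈ S⟦G⟧` are eventually strictly increasing
and unbounded above, then `f` is monolithic. -/
theorem series_monolithic_of_gaps_strictMono_unbounded
    {S : Type*} [CommSemiring S] {G : Type*} [AddCommGroup G] [LinearOrder G] [IsOrderedAddMonoid G]
    (hS : IsSemidomain S) (hred : AddReduced S)
    (s : ℕ → S) (g : ℕ → G) (hg : StrictMono g) (hs : ∀ i, s i ≠ 0)
    (f : HahnSeries G S)
    (hcoeff : ∀ i, f.coeff (g i) = s i) (hsupp : f.support = Set.range g)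
    (N : ℕ)
    (hmono : StrictMono (fun i : ℕ => g (N + i + 1) - g (N + i)))
    (hunb : ∀ b : G, ∃ i : ℕ, b < g (N + i + 1) - g (N + i)) :
    MonolithicSeries f := by
  have hf0 : f ≠ 0 := by
    intro h
    apply hs 0
    rw [← hcoeff 0, h, HahnSeries.coeff_zero]
  refine ⟨hf0, ?_⟩
  intro p q hp hq heq
  by_contra hcon
  push_neg at hcon
  obtain ⟨hpm, hqm⟩ := hcon
  obtain ⟨a0, a1, ha0, ha1, haa⟩ := two_of_not_monomial hpm
  obtain ⟨b0, b1, hb0, hb1, hbb⟩ := two_of_not_monomial hqm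
  have hsub : ∀ a ∈ p.support, ∀ b ∈ q.support, a + b ∈ Set.range g := by
    intro a ha b hb
    rw [← hsupp, heq]
    exact mul_mem_support hS hred ha hb
  have hinf : p.support.Infinite ∨ q.support.Infinite := by
    by_contra hcc
    push_neg at hcc
    have h1 : Set.Finite (p.support + q.support) :=
      hcc.1.add hcc.2
    have h2 : Set.range g ⊆ p.support + q.support := by
      rw [← hsupp, heq]
      exact HahnSeries.support_mul_subset
    exact (Set.infinite_range_of_injective hg.injective) (h1.subset h2)
  rcases hinf with hi | hi
  · exact key g hg N hmono hunb p.support hi b0 b1 hbb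
      (fun a ha => ⟨hsub a ha b0 hb0, hsub a ha b1 hb1⟩)
  · exact key g hg N hmono hunb q.support hi a0 a1 haa
      (fun b hb => ⟨by rw [add_comm]; exact hsub a0 ha0 b hb,
        by rw [add_comm]; exact hsub a1 ha1 b hb⟩)
end
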